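/- For a non-autonomous discrete dynamical system (X, f_{1,∞}) on a compact metric space, cofinite sensitivity implies strong multi-sensitivity. -/
import Mathlib


open Metric Set MeasureTheory

/-- `nacomp f n = f_n ∘ ⋯ ∘ f_1` (and `nacomp f 0 = id`): the time-`n` map of the
non-autonomous system `f_{1,∞}`. -/
def nacomp {X : Type*} (f : ℕ → X → X) : ℕ → X → X
  | 0 => id
  | n + 1 => f (n + 1) ∘ nacomp f n

/-- `compFrom f i k = f_{i+k-1} ∘ ⋯ ∘ f_i`, i.e. `f_i^k`. -/
def compFrom {X : Type*} (f : ℕ → X → X) (i : ℕ) : ℕ → X → X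
  | 0 => id
  | k + 1 => f (i + k) ∘ compFrom f i k

/-- Multi-sensitivity of `f_{1,∞}` with respect to the vector `(v 0, …, v (r-1))`. -/
def multiSensWrt {X : Type*} [MetricSpace X] (f : ℕ → X → X) (r : ℕ) (v : ℕ → ℕ) : Prop :=
  ∃ δ > 0, ∀ U : ℕ → Set X, (∀ i < r, IsOpen (U i) ∧ (U i).Nonempty) →
    ∃ n ≥ 1, ∀ i < r, ∃ x ∈ U i, ∃ y ∈ U i,
      δ < dist (nacomp f (n * v i) x) (nacomp f (n * v i) y)

/-- Strong multi-sensitivity: multi-sensitivity w.r.t. every vector in `ℕ^r`, every `r`. -/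
def strongMultiSens {X : Type*} [MetricSpace X] (f : ℕ → X → X) : Prop :=
  ∀ r ≥ 1, ∀ v : ℕ → ℕ, (∀ i < r, 1 ≤ v i) → multiSensWrt f r v

/-- `𝒩`-sensitivity: multi-sensitivity w.r.t. `(1, 2, …, r)` for every `r`. -/
def nSens {X : Type*} [MetricSpace X] (f : ℕ → X → X) : Prop :=
  ∀ r ≥ 1, multiSensWrt f r (fun i => i + 1)

/-- Sensitivity of the non-autonomous system. -/
def sens {X : Type*} [MetricSpace X] (f : ℕ → X → X) : Prop :=
  ∃ δ > 0, ∀ U : Set X, IsOpen U → U.Nonempty →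
    ∃ n ≥ 1, ∃ x ∈ U, ∃ y ∈ U, δ < dist (nacomp f n x) (nacomp f n y)

/-- Multi-sensitivity of the non-autonomous system. -/
def multiSens {X : Type*} [MetricSpace X] (f : ℕ → X → X) : Prop :=
  ∃ δ > 0, ∀ r : ℕ, ∀ U : ℕ → Set X, (∀ i < r, IsOpen (U i) ∧ (U i).Nonempty) →
    ∃ n ≥ 1, ∀ i < r, ∃ x ∈ U i, ∃ y ∈ U i, δ < dist (nacomp f n x) (nacomp f n y)

/-- Cofinite sensitivity: for some `δ > 0`, for every nonempty open `U` the set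
`N_{f_{1,∞}}(U, δ)` is cofinite in `{1, 2, …}`. -/
def cofSens {X : Type*} [MetricSpace X] (f : ℕ → X → X) : Prop :=
  ∃ δ > 0, ∀ U : Set X, IsOpen U → U.Nonempty →
    {n : ℕ | 1 ≤ n ∧ ¬ ∃ x ∈ U, ∃ y ∈ U, δ < dist (nacomp f n x) (nacomp f n y)}.Finite

/-- Autonomous analogue of `multiSensWrt` for a single map `g`. -/
def multiSensWrtAuto {X : Type*} [MetricSpace X] (g : X → X) (r : ℕ) (v : ℕ → ℕ) : Prop :=
  ∃ δ > 0, ∀ U : ℕ → Set X, (∀ i < r, IsOpen (U i) ∧ (U i).Nonempty) →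
    ∃ n ≥ 1, ∀ i < r, ∃ x ∈ U i, ∃ y ∈ U i,
      δ < dist (g^[n * v i] x) (g^[n * v i] y)

def strongMultiSensAuto {X : Type*} [MetricSpace X] (g : X → X) : Prop :=
  ∀ r ≥ 1, ∀ v : ℕ → ℕ, (∀ i < r, 1 ≤ v i) → multiSensWrtAuto g r v

def nSensAuto {X : Type*} [MetricSpace X] (g : X → X) : Prop :=
  ∀ r ≥ 1, multiSensWrtAuto g r (fun i => i + 1)

/-- `k`-periodicity of the non-autonomous system: `f_{j+kl} = f_j` for `l ≥ 1`, `1 ≤ j ≤ k`. -/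
def kPeriodic {X : Type*} (f : ℕ → X → X) (k : ℕ) : Prop :=
  1 ≤ k ∧ ∀ l ≥ 1, ∀ j, 1 ≤ j → j ≤ k → f (j + k * l) = f j

/-- Multi-transitivity of the non-autonomous system. -/
def multiTrans {X : Type*} [TopologicalSpace X] (f : ℕ → X → X) : Prop :=
  ∀ m ≥ 1, ∀ U V : ℕ → Set X,
    (∀ i < m, IsOpen (U i) ∧ (U i).Nonempty ∧ IsOpen (V i) ∧ (V i).Nonempty) →
    ∃ k ≥ 1, ∀ i < m, (nacomp f ((i + 1) * k) '' U i ∩ V i).Nonempty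

/-- Multi-sensitivity w.r.t. a vector, for an explicit distance function `ρ`
(used for products equipped with the metric `√(d₁² + d₂²)`). -/
def multiSensWrtD {Z : Type*} [TopologicalSpace Z] (ρ : Z → Z → ℝ) (f : ℕ → Z → Z)
    (r : ℕ) (v : ℕ → ℕ) : Prop :=
  ∃ δ > 0, ∀ U : ℕ → Set Z, (∀ i < r, IsOpen (U i) ∧ (U i).Nonempty) →
    ∃ n ≥ 1, ∀ i < r, ∃ x ∈ U i, ∃ y ∈ U i,
      δ < ρ (nacomp f (n * v i) x) (nacomp f (n * v i) y)

def strongMultiSensD {Z : Type*} [TopologicalSpace Z] (ρ : Z → Z → ℝ) (f : ℕ → Z → Z) : Prop :=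
  ∀ r ≥ 1, ∀ v : ℕ → ℕ, (∀ i < r, 1 ≤ v i) → multiSensWrtD ρ f r v

def nSensD {Z : Type*} [TopologicalSpace Z] (ρ : Z → Z → ℝ) (f : ℕ → Z → Z) : Prop :=
  ∀ r ≥ 1, multiSensWrtD ρ f r (fun i => i + 1)

/-- The metric `√(d₁² + d₂²)` on a product of metric spaces. -/
noncomputable def prodDist {X Y : Type*} [MetricSpace X] [MetricSpace Y]
    (p q : X × Y) : ℝ :=
  Real.sqrt (dist p.1 q.1 ^ 2 + dist p.2 q.2 ^ 2)

/-- `N_{f_{1,∞}^{[v]}}(U, δ)` for an explicit distance function `ρ`. -/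
def NsetD {Z : Type*} (ρ : Z → Z → ℝ) (f : ℕ → Z → Z) (v : ℕ) (U : Set Z) (δ : ℝ) : Set ℕ :=
  {n : ℕ | 1 ≤ n ∧ ∃ x ∈ U, ∃ y ∈ U, δ < ρ (nacomp f (n * v) x) (nacomp f (n * v) y)}

/-- `N_{f_{1,∞}^{[v]} × g_{1,∞}^{[v']}}(U × U', δ)` for the product metric `√(d₁² + d₂²)`. -/
noncomputable def NsetProd {X Y : Type*} [MetricSpace X] [MetricSpace Y]
    (f : ℕ → X → X) (g : ℕ → Y → Y) (v v' : ℕ) (U : Set X) (U' : Set Y) (δ : ℝ) : Set ℕ :=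
  {n : ℕ | 1 ≤ n ∧ ∃ p ∈ U ×ˢ U', ∃ q ∈ U ×ˢ U',
    δ < prodDist (nacomp f (n * v) p.1, nacomp g (n * v') p.2)
                 (nacomp f (n * v) q.1, nacomp g (n * v') q.2)}

/-- cofinite sensitivity implies strong multi-sensitivity. -/
theorem stmt_0 {X : Type*} [MetricSpace X] [CompactSpace X] (f : ℕ → X → X)
    (hf : ∀ n, Continuous (f n)) (h : cofSens f) : strongMultiSens f := by
  obtain ⟨δ, hδ, hcof⟩ := h
  intro r hr v hv
  refine ⟨δ, hδ, fun U hU => ?_⟩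
  set B : ℕ → Set ℕ := fun i =>
    {n : ℕ | 1 ≤ n ∧ ¬ ∃ x ∈ U i, ∃ y ∈ U i, δ < dist (nacomp f n x) (nacomp f n y)} with hBdef
  have hB : ∀ i < r, (B i).Finite := fun i hi => hcof (U i) (hU i hi).1 (hU i hi).2
  have hfin : (⋃ i ∈ Finset.range r, B i).Finite :=
    Set.Finite.biUnion (Finset.range r).finite_toSet
      (fun i hi => hB i (Finset.mem_range.mp hi))
  obtain ⟨N, hN⟩ := hfin.bddAbove
  refine ⟨N + 1, Nat.le_add_left 1 N, fun i hi => ?_⟩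
  have hvi : 1 ≤ v i := hv i hi
  have hge : N + 1 ≤ (N + 1) * v i := Nat.le_mul_of_pos_right _ hvi
  have hnot : (N + 1) * v i ∉ B i := by
    intro hmem
    have : (N + 1) * v i ≤ N := hN (Set.mem_biUnion (Finset.mem_range.mpr hi) hmem)
    omega
  have h1 : 1 ≤ (N + 1) * v i := le_trans (Nat.le_add_left 1 N) hge
  simp only [hBdef, Set.mem_setOf_eq, not_and, not_not] at hnot
  exact hnot h1
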